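/- Fix a real number β > -1 and an integer n ≥ 2. Let 𝒢 be a sub-σ-algebra of a probability space, let X be a 𝒢-measurable random variable taking values in the positive integers, and let Y be an integrable random variable with Y − X ∈ {0,1} almost surely and P( Y = X+1 | 𝒢 ) ≥ X/(2(2+β)n) almost surely. Then E( 1/Y | 𝒢 ) ≤ (1/X)·(1 − 1/(4(2+β)n)) almost surely. -/

import Mathlib

open MeasureTheory

/-- One-step conditional expectation estimate from the proof of
Lemma 2.2: if `Y - X ∈ {0,1}` a.s. and
`P(Y = X+1 | 𝒢) ≥ X/(2(2+β)n)` a.s., then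
`E(1/Y | 𝒢) ≤ (1/X)(1 - 1/(4(2+β)n))` a.s. -/
theorem stmt8 {Ω : Type*} {m0 : MeasurableSpace Ω} (μ : Measure Ω)
    [IsProbabilityMeasure μ]
    (𝒢 : MeasurableSpace Ω) (h𝒢 : 𝒢 ≤ m0)
    (β : ℝ) (hβ : -1 < β) (n : ℕ) (hn : 2 ≤ n)
    (X Y : Ω → ℕ)
    (hX : Measurable[𝒢] X) (hXpos : ∀ ω, 1 ≤ X ω)
    (hYint : Integrable (fun ω => (Y ω : ℝ)) μ)
    (hstep : ∀ᵐ ω ∂μ, Y ω = X ω ∨ Y ω = X ω + 1)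
    (hprob : (fun ω => (X ω : ℝ) / (2 * (2 + β) * n)) ≤ᵐ[μ]
      μ[Set.indicator {ω | Y ω = X ω + 1} (fun _ => (1 : ℝ)) | 𝒢]) :
    μ[fun ω => 1 / (Y ω : ℝ) | 𝒢] ≤ᵐ[μ]
      fun ω => (1 / (X ω : ℝ)) * (1 - 1 / (4 * (2 + β) * n)) := by
  have hXpos' : ∀ ω, (1:ℝ) ≤ (X ω : ℝ) := fun ω => by exact_mod_cast hXpos ω
  have hXm0 : Measurable[m0] X := hX.mono h𝒢 le_rfl
  have hXc : Measurable[𝒢] fun ω => (X ω : ℝ) := measurable_from_nat.comp hX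
  have hXc0 : Measurable[m0] fun ω => (X ω : ℝ) := measurable_from_nat.comp hXm0
  set I : Ω → ℝ := Set.indicator {ω | Y ω = X ω + 1} (fun _ => (1 : ℝ)) with hI
  set c : Ω → ℝ := fun ω => 1 / ((X ω : ℝ) * ((X ω : ℝ) + 1)) with hc
  -- measurability of I (up to a.e.)
  obtain ⟨f, hfm, hff⟩ := hYint.1
  have hXr : Measurable[m0] fun ω => (X ω : ℝ) + 1 := hXc0.add_const 1
  have hIae : I =ᵐ[μ] Set.indicator {ω | f ω = (X ω : ℝ) + 1} (fun _ => (1:ℝ)) := by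
    filter_upwards [hff] with ω hω
    have hiff : (Y ω = X ω + 1) ↔ (f ω = (X ω : ℝ) + 1) := by
      rw [← hω]; exact_mod_cast Nat.cast_inj.symm
    by_cases h : Y ω = X ω + 1
    · simp only [hI, Set.indicator_apply, Set.mem_setOf_eq, if_pos h, if_pos (hiff.mp h)]
    · simp only [hI, Set.indicator_apply, Set.mem_setOf_eq, if_neg h,
        if_neg (fun hh => h (hiff.mpr hh))]
  have hIsm : AEStronglyMeasurable[m0] I μ :=
    ⟨Set.indicator {ω | f ω = (X ω : ℝ) + 1} (fun _ => (1:ℝ)),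
      (stronglyMeasurable_const : StronglyMeasurable[m0] (fun _ : Ω => (1:ℝ))).indicator (measurableSet_eq_fun (m := m0) hfm.measurable hXr), hIae⟩
  have hIbd : ∀ ω, |I ω| ≤ 1 := by
    intro ω; rw [hI]
    simp only [Set.indicator_apply, Set.mem_setOf_eq]
    split <;> norm_num
  have hIint : Integrable I μ :=
    (memLp_top_of_bound hIsm 1 (Filter.Eventually.of_forall fun ω => by
      simpa using hIbd ω)).integrable le_top
  -- c is 𝒢-strongly measurable and bounded
  have hcm : StronglyMeasurable[𝒢] c := by
    have : Measurable[𝒢] c := by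
      apply Measurable.div measurable_const
      exact hXc.mul (hXc.add_const 1)
    exact this.stronglyMeasurable
  have hXposR : ∀ ω, (0:ℝ) < (X ω : ℝ) := fun ω => lt_of_lt_of_le one_pos (hXpos' ω)
  have hcbd : ∀ ω, 0 ≤ c ω ∧ c ω ≤ 1 := by
    intro ω
    have hx := hXpos' ω
    constructor
    · positivity
    · rw [hc]
      rw [div_le_one (by nlinarith)]
      nlinarith
  have hcIint : Integrable (c * I) μ := by
    refine (memLp_top_of_bound ((hcm.mono h𝒢).aestronglyMeasurable.mul hIsm) 1
      (Filter.Eventually.of_forall fun ω => ?_)).integrable le_top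
    have := hIbd ω
    have := (hcbd ω).1
    have := (hcbd ω).2
    simp only [Pi.mul_apply, norm_mul, Real.norm_eq_abs]
    calc |c ω| * |I ω| ≤ 1 * 1 := by
          apply mul_le_mul _ (hIbd ω) (abs_nonneg _) zero_le_one
          rw [abs_of_nonneg (hcbd ω).1]; exact (hcbd ω).2
      _ = 1 := by norm_num
  -- 1/X is 𝒢-measurable, bounded, integrable
  have hXinvm : StronglyMeasurable[𝒢] fun ω => 1 / (X ω : ℝ) :=
    (Measurable.div measurable_const hXc).stronglyMeasurable
  have hXinvint : Integrable (fun ω => 1 / (X ω : ℝ)) μ := by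
    refine (memLp_top_of_bound (hXinvm.mono h𝒢).aestronglyMeasurable 1
      (Filter.Eventually.of_forall fun ω => ?_)).integrable le_top
    have hx := hXpos' ω
    rw [Real.norm_eq_abs, abs_of_nonneg (by positivity)]
    rw [div_le_one (by linarith)]; linarith
  -- key a.e. identity : 1/Y = 1/X - c * I
  have hkey : (fun ω => 1 / (Y ω : ℝ)) =ᵐ[μ]
      (fun ω => 1 / (X ω : ℝ)) - c * I := by
    filter_upwards [hstep] with ω hω
    have hx := hXpos' ω
    simp only [Pi.sub_apply, Pi.mul_apply]
    rcases hω with h | h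
    · have hne : ¬ (Y ω = X ω + 1) := by omega
      simp only [hI, Set.indicator_apply, Set.mem_setOf_eq, if_neg hne, mul_zero, sub_zero, h]
      norm_num
    · have hx0 : (X ω : ℝ) ≠ 0 := by linarith
      have hx1 : (X ω : ℝ) + 1 ≠ 0 := by linarith
      simp only [hI, Set.indicator_apply, Set.mem_setOf_eq, if_pos h, mul_one, hc, h]
      push_cast
      field_simp
      ring
  have h1 : μ[fun ω => 1 / (Y ω : ℝ) | 𝒢] =ᵐ[μ]
      μ[(fun ω => 1 / (X ω : ℝ)) - c * I | 𝒢] := condExp_congr_ae hkey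
  have h2 : μ[(fun ω => 1 / (X ω : ℝ)) - c * I | 𝒢] =ᵐ[μ]
      μ[fun ω => 1 / (X ω : ℝ) | 𝒢] - μ[c * I | 𝒢] := condExp_sub hXinvint hcIint 𝒢
  have h3 : μ[fun ω => 1 / (X ω : ℝ) | 𝒢] = fun ω => 1 / (X ω : ℝ) :=
    condExp_of_stronglyMeasurable h𝒢 hXinvm hXinvint
  have h4 : μ[c * I | 𝒢] =ᵐ[μ] c * μ[I | 𝒢] :=
    condExp_mul_of_stronglyMeasurable_left hcm hcIint hIint
  -- combine
  have hD : (0:ℝ) < 2 * (2 + β) * n := by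
    have : (2:ℝ) ≤ (n:ℝ) := by exact_mod_cast hn
    nlinarith
  filter_upwards [h1, h2, h4, hprob] with ω e1 e2 e4 hp
  rw [e1, e2, Pi.sub_apply, h3, e4, Pi.mul_apply]
  set x := (X ω : ℝ)
  set E := (μ[I | 𝒢]) ω
  set D := 2 * (2 + β) * (n:ℝ) with hDdef
  have hx : (1:ℝ) ≤ x := hXpos' ω
  have hcw : c ω = 1 / (x * (x + 1)) := rfl
  have hE : x / D ≤ E := hp
  have h4D : 4 * (2 + β) * (n:ℝ) = 2 * D := by rw [hDdef]; ring
  rw [hcw, h4D]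
  -- goal: 1/x - (1/(x*(x+1))) * E ≤ (1/x) * (1 - 1/(2*D))
  have hcpos : (0:ℝ) < 1 / (x * (x + 1)) := by positivity
  have step1 : (1/(x*(x+1))) * (x / D) ≤ (1/(x*(x+1))) * E :=
    mul_le_mul_of_nonneg_left hE hcpos.le
  have step2 : 1/x - (1/(x*(x+1))) * E ≤ 1/x - (1/(x*(x+1))) * (x / D) := by linarith
  refine step2.trans ?_
  have hxpos : (0:ℝ) < x := by linarith
  have key : (1/(x*(x+1))) * (x / D) = 1 / ((x+1) * D) := by
    field_simp
  rw [key]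
  have target : (1/x) * (1 - 1/(2*D)) = 1/x - 1/(2*x*D) := by
    field_simp
  rw [target]
  have : 1 / (2*x*D) ≤ 1 / ((x+1) * D) := by
    apply one_div_le_one_div_of_le (by positivity)
    nlinarith
  linarith
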